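/- Let Z_n := Σ_{b=0}^{2^n−1} m(b,n). Then for every n ≥ 1, Z_{n+1} = 2·Z_n + 2^n. -/
import Mathlib


def T (N : ℕ) : ℕ := if N % 2 = 0 then N / 2 else (3 * N + 1) / 2

def m (b n : ℕ) : ℕ := ((Finset.range n).filter (fun k => Odd (T^[k] b))).card

lemma m_succ (b n : ℕ) : m b (n+1) = m b n + (if Odd (T^[n] b) then 1 else 0) := by
  unfold m
  rw [Finset.range_add_one, Finset.filter_insert]
  split
  · rw [Finset.card_insert_of_notMem (by simp)]
  · simp

lemma key (n : ℕ) : ∀ k ≤ n, ∀ b t,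
    T^[k] (b + 2^n * t) = T^[k] b + 3 ^ (m b k) * (2^(n-k) * t) := by
  intro k
  induction k with
  | zero => intro _ b t; simp [m]
  | succ k ih =>
    intro hk b t
    have hk' : k ≤ n := Nat.le_of_succ_le hk
    rw [Function.iterate_succ_apply', Function.iterate_succ_apply', ih hk' b t, m_succ]
    have h2 : 2^(n-k) = 2 * 2^(n-(k+1)) := by
      rw [← pow_succ']
      congr 1
      omega
    set A := T^[k] b with hA
    set X := 3 ^ (m b k) * (2^(n-(k+1)) * t) with hX
    have hbig : 3 ^ (m b k) * (2^(n-k) * t) = 2 * X := by rw [h2, hX]; ring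
    have hsucc : ∀ c : ℕ, 3 ^ (m b k + c) * (2^(n-(k+1)) * t) = 3 ^ c * X := by
      intro c; rw [hX, pow_add]; ring
    rw [hbig]
    unfold T
    rcases Nat.even_or_odd A with he | ho
    · have hmod : A % 2 = 0 := Nat.even_iff.mp he
      rw [if_pos (by omega), if_pos hmod,
        if_neg (by simpa [Nat.odd_iff] using hmod), hsucc 0]
      have : (3:ℕ)^0 = 1 := pow_zero 3
      omega
    · have hmod : A % 2 = 1 := Nat.odd_iff.mp ho
      rw [if_neg (by omega), if_neg (by omega), if_pos ho, hsucc 1]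
      have : (3:ℕ)^1 = 3 := pow_one 3
      omega

lemma m_shift (n b : ℕ) : m (b + 2^n) n = m b n := by
  unfold m
  congr 1
  apply Finset.filter_congr
  intro k hk
  simp only [Finset.mem_range] at hk
  have h := key n k hk.le b 1
  rw [mul_one] at h
  rw [h]
  have h2 : 2^(n-k) = 2 * 2^(n-(k+1)) := by
    rw [← pow_succ']; congr 1; omega
  have heven : (3 ^ (m b k) * (2^(n-k) * 1)) % 2 = 0 := by
    rw [h2, mul_one, show 3^(m b k)*(2*2^(n-(k+1))) = 2*(3^(m b k)*2^(n-(k+1))) by ring]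
    exact Nat.mul_mod_right 2 _
  simp only [Nat.odd_iff, eq_iff_iff]
  omega

lemma parity_flip (n b : ℕ) : T^[n] (b + 2^n) = T^[n] b + 3 ^ (m b n) := by
  have h := key n n le_rfl b 1
  simpa using h

theorem stmt11 : ∀ n ≥ 1,
    ∑ b ∈ Finset.range (2 ^ (n + 1)), m b (n + 1)
      = 2 * (∑ b ∈ Finset.range (2 ^ n), m b n) + 2 ^ n := by
  intro n _
  have hsplit : (2:ℕ) ^ (n+1) = 2^n + 2^n := by ring
  rw [hsplit, Finset.sum_range_add]
  have hterm : ∀ b, m b (n+1) + m (2^n + b) (n+1) = 2 * m b n + 1 := by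
    intro b
    rw [add_comm (2^n) b, m_succ, m_succ, m_shift, parity_flip]
    have h3 : (3:ℕ) ^ (m b n) % 2 = 1 := Nat.odd_iff.mp (Odd.pow (by decide))
    rcases Nat.even_or_odd (T^[n] b) with he | ho
    · have hmod : T^[n] b % 2 = 0 := Nat.even_iff.mp he
      rw [if_neg (by simpa [Nat.odd_iff] using hmod),
        if_pos (by rw [Nat.odd_iff]; omega)]
      ring
    · have hmod : T^[n] b % 2 = 1 := Nat.odd_iff.mp ho
      rw [if_pos ho, if_neg (by rw [Nat.odd_iff]; omega)]
      ring
  calc (∑ b ∈ Finset.range (2^n), m b (n+1))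
        + ∑ b ∈ Finset.range (2^n), m (2^n + b) (n+1)
      = ∑ b ∈ Finset.range (2^n), (m b (n+1) + m (2^n + b) (n+1)) := by
        rw [Finset.sum_add_distrib]
    _ = ∑ b ∈ Finset.range (2^n), (2 * m b n + 1) := by
        exact Finset.sum_congr rfl fun b _ => hterm b
    _ = 2 * (∑ b ∈ Finset.range (2^n), m b n) + 2^n := by
        rw [Finset.sum_add_distrib, Finset.mul_sum, Finset.sum_const,
          Finset.card_range, smul_eq_mul, mul_one]
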